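/- If f : ℝ → ℝ is additive and x ↦ exp(i·f(x)) is Lebesgue measurable, then there exists c ∈ ℝ with f(x) = c·x for all x ∈ ℝ. -/

import Mathlib

open MeasureTheory intervalIntegral Set Metric Filter

-- Aux 1: additive function valued in multiples of 2π is zero
theorem aux_discrete (h : ℝ → ℝ) (hadd : ∀ x y, h (x + y) = h x + h y)
    (hval : ∀ x, ∃ n : ℤ, h x = 2 * Real.pi * n) : ∀ x, h x = 0 := by
  have hdouble : ∀ x, h x = 2 * h (x / 2) := by
    intro x
    have := hadd (x / 2) (x / 2)
    rw [add_halves] at this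
    linarith
  have hpow : ∀ (n : ℕ) (x), h x = 2 ^ n * h (x / 2 ^ n) := by
    intro n
    induction n with
    | zero => simp
    | succ k ih =>
      intro x
      rw [ih x, hdouble (x / 2 ^ k)]
      rw [div_div]
      ring_nf
  intro x
  by_contra hx
  obtain ⟨n, hn⟩ := pow_unbounded_of_one_lt (|h x| / (2 * Real.pi)) (by norm_num : (1:ℝ) < 2)
  obtain ⟨k, hk⟩ := hval (x / 2 ^ n)
  have hk0 : k ≠ 0 := by
    intro h0
    rw [h0] at hk
    simp at hk
    have := hpow n x
    rw [hk] at this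
    simp at this
    exact hx this
  have h1 : (2 * Real.pi) ≤ |h (x / 2 ^ n)| := by
    rw [hk, abs_mul]
    have : (1:ℝ) ≤ |(k:ℝ)| := by
      rw [← Int.cast_abs]
      exact_mod_cast Int.one_le_abs hk0
    have hpi : 0 < 2 * Real.pi := by positivity
    nlinarith [abs_of_pos hpi]
  have h2 : |h x| = 2 ^ n * |h (x / 2 ^ n)| := by
    rw [hpow n x, abs_mul, abs_of_pos (by positivity : (0:ℝ) < 2 ^ n)]
  have hpi : 0 < 2 * Real.pi := by positivity
  have : |h x| / (2 * Real.pi) < 2 ^ n := hn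
  have : |h x| < 2 ^ n * (2 * Real.pi) := by
    rwa [div_lt_iff₀ hpi] at this
  nlinarith [h1, h2, (by positivity : (0:ℝ) < 2 ^ n)]
theorem aux_intable (g : ℝ → ℂ) (hmeas : AEMeasurable g volume)
    (hnorm : ∀ x, ‖g x‖ = 1) : ∀ a b : ℝ, IntervalIntegrable g volume a b := by
  intro a b
  rw [intervalIntegrable_iff]
  refine Integrable.mono' (g := fun _ => (1:ℝ)) ?_ hmeas.aestronglyMeasurable.restrict ?_
  · exact integrableOn_const measure_Ioc_lt_top.ne
  · filter_upwards with y using le_of_eq (hnorm y)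

theorem aux_nonvanish (g : ℝ → ℂ) (hmeas : AEMeasurable g volume)
    (hnorm : ∀ x, ‖g x‖ = 1) : ∃ a : ℝ, (∫ t in (0:ℝ)..a, g t) ≠ 0 := by
  have hII := aux_intable g hmeas hnorm
  have hloc : LocallyIntegrable g volume := by
    rw [MeasureTheory.locallyIntegrable_iff]
    intro K hK
    refine Integrable.mono' (g := fun _ => (1:ℝ)) ?_ hmeas.aestronglyMeasurable.restrict ?_
    · exact integrableOn_const hK.measure_lt_top.ne
    · filter_upwards with y using le_of_eq (hnorm y)
  by_contra hcon
  push_neg at hcon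
  have hball : ∀ (x r : ℝ), 0 < r → (∫ t in closedBall x r, g t) = 0 := by
    intro x r hr
    rw [Real.closedBall_eq_Icc, integral_Icc_eq_integral_Ioc,
      ← intervalIntegral.integral_of_le (by linarith)]
    have := intervalIntegral.integral_add_adjacent_intervals (hII (x - r) 0) (hII 0 (x + r))
    rw [← this, hcon (x + r), intervalIntegral.integral_symm, hcon (x - r)]
    simp
  have hdiff := IsUnifLocDoublingMeasure.ae_tendsto_average (μ := volume) (E := ℂ) hloc 1
  have : ∀ᵐ x ∂(volume : Measure ℝ), g x = 0 := by
    filter_upwards [hdiff] with x hx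
    have hδ : Tendsto (fun j : ℕ => (1:ℝ) / (j + 1)) atTop (nhdsWithin 0 (Ioi 0)) := by
      apply tendsto_nhdsWithin_of_tendsto_nhds_of_eventually_within
      · exact tendsto_one_div_add_atTop_nhds_zero_nat
      · filter_upwards with j
        rw [Set.mem_Ioi]
        positivity
    have hmem : ∀ᶠ j : ℕ in atTop, x ∈ closedBall x (1 * ((1:ℝ) / (j + 1))) := by
      filter_upwards with j
      apply mem_closedBall_self
      rw [one_mul]
      positivity
    have hlim := hx (fun _ => x) (fun j : ℕ => (1:ℝ) / (j + 1)) hδ hmem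
    have hzero : (fun j : ℕ => ⨍ y in closedBall x ((1:ℝ) / (j + 1)), g y) = fun _ => 0 := by
      funext j
      rw [setAverage_eq, hball x _ (by positivity)]
      simp
    rw [hzero] at hlim
    exact (tendsto_const_nhds_iff.mp hlim).symm
  obtain ⟨x, hx⟩ := (this.and (ae_of_all _ hnorm)).exists
  rw [hx.1] at hx
  simp at hx
theorem aux_char (g : ℝ → ℂ) (hmeas : AEMeasurable g volume)
    (hnorm : ∀ x, ‖g x‖ = 1) (hmul : ∀ x y, g (x + y) = g x * g y)
    (hg0 : g 0 = 1) : ∃ b : ℂ, ∀ x, g x = Complex.exp (b * x) := by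
  have hII := aux_intable g hmeas hnorm
  obtain ⟨a, hC⟩ := aux_nonvanish g hmeas hnorm
  set C : ℂ := ∫ t in (0:ℝ)..a, g t with hCdef
  set G : ℝ → ℂ := fun y => ∫ t in (0:ℝ)..y, g t with hGdef
  -- key identity
  have hkey : ∀ x : ℝ, g x * C = ∫ t in x..(x + a), g t := by
    intro x
    have h1 : (∫ s in (0:ℝ)..a, g (x + s)) = ∫ t in (x + 0)..(x + a), g t :=
      intervalIntegral.integral_comp_add_left (fun t => g t) x
    rw [add_zero] at h1
    rw [← h1]
    have h2 : (∫ s in (0:ℝ)..a, g (x + s)) = ∫ s in (0:ℝ)..a, g x * g s := by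
      apply intervalIntegral.integral_congr
      intro s _
      exact hmul x s
    rw [h2, intervalIntegral.integral_const_mul]
  have hsub : ∀ x : ℝ, (∫ t in x..(x + a), g t) = G (x + a) - G x := by
    intro x
    rw [hGdef]
    simp only
    rw [← intervalIntegral.integral_interval_sub_left (hII 0 (x + a)) (hII 0 x)]
  have hgeq : ∀ x : ℝ, g x = (G (x + a) - G x) * C⁻¹ := by
    intro x
    rw [← hsub, ← hkey]
    field_simp
  have hGcont : Continuous G := intervalIntegral.continuous_primitive (fun a b => hII a b) 0
  have hgcont : Continuous g := by
    have : g = fun x => (G (x + a) - G x) * C⁻¹ := funext hgeq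
    rw [this]
    fun_prop
  -- differentiability of the primitive
  have hGderiv : ∀ y : ℝ, HasDerivAt G (g y) y := by
    intro y
    exact intervalIntegral.integral_hasDerivAt_right (hII 0 y)
      (hgcont.stronglyMeasurableAtFilter _ _) hgcont.continuousAt
  set b : ℂ := (g a - 1) * C⁻¹ with hbdef
  have hgderiv : ∀ x : ℝ, HasDerivAt g (b * g x) x := by
    intro x
    have h1 : HasDerivAt (fun x : ℝ => G (x + a)) (g (x + a)) x := by
      simpa using HasDerivAt.comp_add_const (f := G) (f' := g (x + a)) x a (hGderiv (x + a))
    have h2 : HasDerivAt (fun x : ℝ => (G (x + a) - G x) * C⁻¹)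
        ((g (x + a) - g x) * C⁻¹) x := ((h1.sub (hGderiv x)).mul_const _)
    have h4 : HasDerivAt g ((g (x + a) - g x) * C⁻¹) x :=
      h2.congr_of_eventuallyEq (Filter.Eventually.of_forall hgeq)
    convert h4 using 1
    rw [hmul x a, hbdef]
    ring
  -- solve the ODE
  have hexp : ∀ x : ℝ, HasDerivAt (fun x : ℝ => Complex.exp (-(b * x)))
      (Complex.exp (-(b * x)) * (-b)) x := by
    intro x
    have h0 : HasDerivAt (fun x : ℝ => ((x : ℂ))) 1 x := by
      simpa using (hasDerivAt_id x).ofReal_comp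
    have h1 : HasDerivAt (fun x : ℝ => -(b * (x : ℂ))) (-b) x := by
      simpa using ((h0.const_mul b).fun_neg)
    simpa [mul_comm] using h1.cexp
  set φ : ℝ → ℂ := fun x => g x * Complex.exp (-(b * x)) with hφdef
  have hφderiv : ∀ x : ℝ, HasDerivAt φ 0 x := by
    intro x
    have := (hgderiv x).fun_mul (hexp x)
    convert this using 1
    all_goals try rfl
    ring
  have hφconst : ∀ x : ℝ, φ x = φ 0 := by
    intro x
    apply is_const_of_deriv_eq_zero (fun y => (hφderiv y).differentiableAt)
    intro y
    exact (hφderiv y).deriv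
  refine ⟨b, fun x => ?_⟩
  have h0 : φ 0 = 1 := by simp [hφdef, hg0]
  have hx : g x * Complex.exp (-(b * x)) = 1 := by
    have := hφconst x
    rw [h0] at this
    exact this
  have hne := Complex.exp_ne_zero (-(b * x))
  have : g x = (Complex.exp (-(b * x)))⁻¹ :=
    eq_inv_of_mul_eq_one_left hx
  rw [this, ← Complex.exp_neg]
  norm_num
theorem stmt_9 (f : ℝ → ℝ) (hf : ∀ x y, f (x + y) = f x + f y)
    (hmeas : AEMeasurable (fun x => Complex.exp (Complex.I * (f x : ℂ)))
      MeasureTheory.volume) :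
    ∃ c : ℝ, ∀ x, f x = c * x := by
  set g : ℝ → ℂ := fun x => Complex.exp (Complex.I * (f x : ℂ)) with hgdef
  have hf0 : f 0 = 0 := by have := hf 0 0; simp at this; linarith
  have hnorm : ∀ x, ‖g x‖ = 1 := by
    intro x
    simp [hgdef, Complex.norm_exp]
  have hmul : ∀ x y, g (x + y) = g x * g y := by
    intro x y
    simp only [hgdef, hf x y, ← Complex.exp_add]
    push_cast
    ring_nf
  have hg0 : g 0 = 1 := by simp [hgdef, hf0]
  obtain ⟨b, hb⟩ := aux_char g hmeas hnorm hmul hg0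
  have hbre : b.re = 0 := by
    have h1 := hnorm 1
    rw [hb 1] at h1
    rw [Complex.norm_exp] at h1
    have : (b * ((1:ℝ):ℂ)).re = b.re := by simp
    rw [this] at h1
    have := Real.exp_log (by norm_num : (0:ℝ) < 1)
    nlinarith [Real.exp_log (zero_lt_one (α := ℝ)), Real.exp_injective (by rw [h1, Real.exp_zero] : Real.exp b.re = Real.exp 0)]
  set c : ℝ := b.im with hcdef
  set h : ℝ → ℝ := fun x => f x - c * x with hhdef
  have hval : ∀ x, ∃ n : ℤ, h x = 2 * Real.pi * n := by
    intro x
    have hx : Complex.exp (Complex.I * (f x : ℂ) - b * x) = 1 := by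
      rw [Complex.exp_sub, ← hb x]
      exact div_self (Complex.exp_ne_zero _)
    obtain ⟨n, hn⟩ := Complex.exp_eq_one_iff.mp hx
    refine ⟨n, ?_⟩
    have him := congrArg Complex.im hn
    simp [Complex.mul_im, hbre] at him
    rw [hhdef]
    simp only
    rw [hcdef, him]
    ring
  have hadd : ∀ x y, h (x + y) = h x + h y := by
    intro x y
    simp only [hhdef, hf x y]
    ring
  refine ⟨c, fun x => ?_⟩
  have := aux_discrete h hadd hval x
  rw [hhdef] at this
  simp only at this
  linarith
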